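/- Suppose Z(G) is a finite group of odd order. Then the squaring map on Z(G) is surjective (so Z(G)/2Z(G) is trivial) and {s ∈ Z(G) : s² = e} = {e}. Consequently, every homomorphism φ : Γ̃ → G with conjugation-stabilizer Z(G) whose conjugacy class is fixed by the involution τ extends to a homomorphism Γ → G, uniquely up to conjugation. -/

import Mathlib

theorem indexTwoNormal {Γ : Type*} [Group Γ] (H : Subgroup Γ) (h : H.index = 2) :
    H.Normal := by
  constructor
  intro n hn g
  rw [Subgroup.mul_mem_iff_of_index_two h, Subgroup.mul_mem_iff_of_index_two h, inv_mem_iff]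
  simp [hn]

/-- The automorphism `Ad_c : x ↦ c x c⁻¹` of an index-two (hence normal) subgroup. -/
def adSub {Γ : Type*} [Group Γ] (H : Subgroup Γ) (h : H.index = 2) (c : Γ) : H →* H where
  toFun x := ⟨c * x * c⁻¹, (indexTwoNormal H h).conj_mem x x.2 c⟩
  map_one' := by ext; simp
  map_mul' x y := by
    ext
    show c * ((x : Γ) * (y : Γ)) * c⁻¹ = c * (x : Γ) * c⁻¹ * (c * (y : Γ) * c⁻¹)
    group

lemma oddSqSurj {Z : Type*} [Group Z] [Finite Z] (hodd : Odd (Nat.card Z)) (x : Z) :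
    ∃ t, t ^ 2 = x := by
  obtain ⟨m, hm⟩ := hodd
  refine ⟨x ^ (m + 1), ?_⟩
  rw [← pow_mul]
  have h1 : x ^ Nat.card Z = 1 := pow_card_eq_one'
  have : (m + 1) * 2 = Nat.card Z + 1 := by omega
  rw [this, pow_succ, h1, one_mul]

lemma oddSqOne {Z : Type*} [Group Z] [Finite Z] (hodd : Odd (Nat.card Z)) (x : Z)
    (h : x ^ 2 = 1) : x = 1 := by
  have h1 := orderOf_dvd_of_pow_eq_one h
  have h2 : orderOf x ∣ Nat.card Z := orderOf_dvd_natCard x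
  have h3 : orderOf x ∣ Nat.gcd 2 (Nat.card Z) := Nat.dvd_gcd h1 h2
  have h4 : Nat.gcd 2 (Nat.card Z) = 1 :=
    Nat.Coprime.gcd_eq_one (Nat.coprime_two_left.mpr hodd)
  rw [h4, Nat.dvd_one] at h3
  exact orderOf_eq_one_iff.mp h3

/-- If `Z(G)` is finite of odd order, then squaring is surjective on
`Z(G)` (so `Z(G)/2Z(G)` is trivial), the only central square root of `e` is `e`, and every
good homomorphism `φ : Γ̃ → G` whose class is fixed by `τ` extends to `Γ`, uniquely up to
conjugation. -/
theorem extension_of_odd_center {Γ G : Type*} [Group Γ] [Group G] (H : Subgroup Γ)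
    (h2 : H.index = 2) (c : Γ) (hc : c ∉ H)
    (hfin : Finite (Subgroup.center G)) (hodd : Odd (Nat.card (Subgroup.center G))) :
    (∀ z ∈ Subgroup.center G, ∃ t ∈ Subgroup.center G, t ^ 2 = z) ∧
    (∀ s ∈ Subgroup.center G, s ^ 2 = 1 → s = 1) ∧
    (∀ φ : H →* G,
      (∀ h : G, (∀ x : H, h * φ x * h⁻¹ = φ x) ↔ h ∈ Subgroup.center G) →
      (∃ g : G, ∀ x : H, φ (adSub H h2 c x) = g * φ x * g⁻¹) →
      (∃ ψ : Γ →* G, ∀ (x : Γ) (hx : x ∈ H), ψ x = φ ⟨x, hx⟩) ∧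
      (∀ ψ₁ ψ₂ : Γ →* G,
        (∀ (x : Γ) (hx : x ∈ H), ψ₁ x = φ ⟨x, hx⟩) →
        (∀ (x : Γ) (hx : x ∈ H), ψ₂ x = φ ⟨x, hx⟩) →
        ∃ k : G, ∀ y : Γ, ψ₂ y = k * ψ₁ y * k⁻¹)) := by
  classical
  have P1 : ∀ z ∈ Subgroup.center G, ∃ t ∈ Subgroup.center G, t ^ 2 = z := by
    intro z hz
    obtain ⟨t, ht⟩ := oddSqSurj hodd (⟨z, hz⟩ : Subgroup.center G)
    exact ⟨t.1, t.2, by simpa using congrArg Subtype.val ht⟩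
  have P2 : ∀ s ∈ Subgroup.center G, s ^ 2 = 1 → s = 1 := by
    intro s hs h1
    have h : (⟨s, hs⟩ : Subgroup.center G) ^ 2 = 1 := Subtype.ext (by simpa using h1)
    have := oddSqOne hodd _ h
    simpa using congrArg Subtype.val this
  refine ⟨P1, P2, ?_⟩
  intro φ hstab ⟨g, hg⟩
  -- basic membership facts
  have hcinv : c⁻¹ ∉ H := fun hh => hc (inv_mem_iff.mp hh)
  have hcc : c * c ∈ H := (Subgroup.mul_mem_iff_of_index_two h2).mpr Iff.rfl
  have hmemA : ∀ {y : Γ}, y ∉ H → c⁻¹ * y ∈ H := fun {y} hy =>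
    (Subgroup.mul_mem_iff_of_index_two h2).mpr (iff_of_false hcinv hy)
  set C2 : H := ⟨c * c, hcc⟩ with hC2
  -- congruence helpers
  have hφeq : ∀ (a b : Γ) (hab : a = b) (ha : a ∈ H) (hb : b ∈ H),
      φ ⟨a, ha⟩ = φ ⟨b, hb⟩ := by
    intro a b hab ha hb; subst hab; rfl
  have hφ : ∀ (a b : Γ) (ha : a ∈ H) (hb : b ∈ H) (hab : a * b ∈ H),
      φ ⟨a * b, hab⟩ = φ ⟨a, ha⟩ * φ ⟨b, hb⟩ := by
    intro a b ha hb hab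
    rw [← map_mul]
    exact congrArg φ (Subtype.ext rfl)
  -- the element z = φ(c²)⁻¹ g² is central
  have e2 : ∀ x : H, adSub H h2 c (adSub H h2 c x) = C2 * x * C2⁻¹ := by
    intro x; ext; simp [adSub]; simp only [hC2]; group
  have key2 : ∀ x : H, g * (g * φ x * g⁻¹) * g⁻¹ = φ C2 * φ x * (φ C2)⁻¹ := by
    intro x
    rw [← hg, ← hg, e2, map_mul, map_mul, map_inv]
  have hz : (φ C2)⁻¹ * (g * g) ∈ Subgroup.center G := by
    refine (hstab _).mp ?_
    intro x
    have k := key2 x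
    calc ((φ C2)⁻¹ * (g * g)) * φ x * ((φ C2)⁻¹ * (g * g))⁻¹
        = (φ C2)⁻¹ * (g * (g * φ x * g⁻¹) * g⁻¹) * φ C2 := by group
      _ = (φ C2)⁻¹ * (φ C2 * φ x * (φ C2)⁻¹) * φ C2 := by rw [k]
      _ = φ x := by group
  obtain ⟨t, htc, ht2⟩ := P1 ((φ C2)⁻¹ * (g * g))⁻¹ (inv_mem hz)
  rw [pow_two] at ht2
  have tcomm : ∀ a : G, a * t = t * a := Subgroup.mem_center_iff.mp htc
  set g' : G := g * t with hg'def
  have hg' : ∀ x : H, φ (adSub H h2 c x) = g' * φ x * g'⁻¹ := by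
    intro x
    rw [hg x]
    have ht : t * φ x * t⁻¹ = φ x :=
      mul_inv_eq_iff_eq_mul.mpr (tcomm (φ x)).symm
    calc g * φ x * g⁻¹ = g * (t * φ x * t⁻¹) * g⁻¹ := by rw [ht]
      _ = g' * φ x * g'⁻¹ := by rw [hg'def]; group
  have hg2 : g' * g' = φ C2 := by
    have step : g' * g' = (g * g) * (t * t) := by
      calc g' * g' = g * (t * g) * t := by rw [hg'def]; group
        _ = g * (g * t) * t := by rw [← tcomm g]
        _ = (g * g) * (t * t) := by group
    rw [step, ht2]
    group
  -- conjugation formulas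
  have hconj : ∀ (x : Γ) (hx : x ∈ H) (hx2 : c * x * c⁻¹ ∈ H),
      φ ⟨c * x * c⁻¹, hx2⟩ = g' * φ ⟨x, hx⟩ * g'⁻¹ := by
    intro x hx hx2
    have := hg' ⟨x, hx⟩
    simpa [adSub] using this
  have hconj' : ∀ (x : Γ) (hx : x ∈ H) (hx2 : c⁻¹ * x * c ∈ H),
      φ ⟨c⁻¹ * x * c, hx2⟩ = g'⁻¹ * φ ⟨x, hx⟩ * g' := by
    intro x hx hx2
    have h3 : c * (c⁻¹ * x * c) * c⁻¹ ∈ H := (indexTwoNormal H h2).conj_mem _ hx2 c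
    have e := hconj (c⁻¹ * x * c) hx2 h3
    have e' : φ ⟨c * (c⁻¹ * x * c) * c⁻¹, h3⟩ = φ ⟨x, hx⟩ := hφeq _ _ (by group) _ _
    rw [e'] at e
    rw [e]; group
  -- the extension
  set f : Γ → G := fun y =>
    if hy : y ∈ H then φ ⟨y, hy⟩ else g' * φ ⟨c⁻¹ * y, hmemA hy⟩ with hf
  have hmul : ∀ a b : Γ, f (a * b) = f a * f b := by
    intro a b
    by_cases ha : a ∈ H <;> by_cases hb : b ∈ H
    · have hab : a * b ∈ H := mul_mem ha hb
      simp only [hf]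
      rw [dif_pos hab, dif_pos ha, dif_pos hb, hφ _ _ ha hb]
    · have hab : a * b ∉ H := fun hh =>
        hb (((Subgroup.mul_mem_iff_of_index_two h2).mp hh).mp ha)
      simp only [hf]
      rw [dif_neg hab, dif_pos ha, dif_neg hb]
      have m1 : c⁻¹ * a * c ∈ H := by
        simpa using (indexTwoNormal H h2).conj_mem a ha c⁻¹
      have m2 : c⁻¹ * b ∈ H := hmemA hb
      have e1 : φ ⟨c⁻¹ * (a * b), hmemA hab⟩
          = φ ⟨(c⁻¹ * a * c) * (c⁻¹ * b), mul_mem m1 m2⟩ := hφeq _ _ (by group) _ _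
      rw [e1, hφ _ _ m1 m2, hconj' a ha m1]
      group
    · have hab : a * b ∉ H := fun hh =>
        ha (((Subgroup.mul_mem_iff_of_index_two h2).mp hh).mpr hb)
      simp only [hf]
      rw [dif_neg hab, dif_neg ha, dif_pos hb]
      have m1 : c⁻¹ * a ∈ H := hmemA ha
      have e1 : φ ⟨c⁻¹ * (a * b), hmemA hab⟩
          = φ ⟨(c⁻¹ * a) * b, mul_mem m1 hb⟩ := hφeq _ _ (by group) _ _
      rw [e1, hφ _ _ m1 hb]
      group
    · have hab : a * b ∈ H :=
        (Subgroup.mul_mem_iff_of_index_two h2).mpr (iff_of_false ha hb)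
      simp only [hf]
      rw [dif_pos hab, dif_neg ha, dif_neg hb]
      have m1 : c⁻¹ * a ∈ H := hmemA ha
      have m2 : c⁻¹ * b ∈ H := hmemA hb
      have m3 : c⁻¹ * (c⁻¹ * a) * c ∈ H := by
        simpa using (indexTwoNormal H h2).conj_mem _ m1 c⁻¹
      have e1 := hconj' (c⁻¹ * a) m1 m3
      have e0 : φ ⟨a * b, hab⟩
          = φ ⟨(c * c) * (c⁻¹ * (c⁻¹ * a) * c) * (c⁻¹ * b),
              mul_mem (mul_mem hcc m3) m2⟩ := hφeq _ _ (by group) _ _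
      have e3 : φ ⟨(c * c) * (c⁻¹ * (c⁻¹ * a) * c) * (c⁻¹ * b),
              mul_mem (mul_mem hcc m3) m2⟩
          = φ C2 * φ ⟨c⁻¹ * (c⁻¹ * a) * c, m3⟩ * φ ⟨c⁻¹ * b, m2⟩ := by
        rw [hφ _ _ (mul_mem hcc m3) m2, hφ _ _ hcc m3]
      rw [e0, e3, e1, ← hg2]
      group
  constructor
  · refine ⟨MonoidHom.mk' f hmul, ?_⟩
    intro x hx
    show f x = φ ⟨x, hx⟩
    simp only [hf]
    rw [dif_pos hx]
  · intro ψ₁ ψ₂ e₁ e₂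
    have kconj : ∀ (ψ : Γ →* G), (∀ (x : Γ) (hx : x ∈ H), ψ x = φ ⟨x, hx⟩) →
        ∀ (x : Γ) (hx : x ∈ H) (hx2 : c * x * c⁻¹ ∈ H),
        ψ c * φ ⟨x, hx⟩ * (ψ c)⁻¹ = φ ⟨c * x * c⁻¹, hx2⟩ := by
      intro ψ hψ x hx hx2
      rw [← hψ x hx, ← hψ _ hx2, ← map_inv, ← map_mul, ← map_mul]
    have hz0 : (ψ₁ c)⁻¹ * ψ₂ c ∈ Subgroup.center G := by
      refine (hstab _).mp ?_
      intro x
      have mem : c * x.1 * c⁻¹ ∈ H := (indexTwoNormal H h2).conj_mem _ x.2 c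
      have k1 := kconj ψ₁ e₁ x.1 x.2 mem
      have k2 := kconj ψ₂ e₂ x.1 x.2 mem
      have E : ψ₁ c * φ x * (ψ₁ c)⁻¹ = ψ₂ c * φ x * (ψ₂ c)⁻¹ := by
        have hx : φ (⟨x.1, x.2⟩ : H) = φ x := rfl
        rw [← hx]; rw [k1, k2]
      calc ((ψ₁ c)⁻¹ * ψ₂ c) * φ x * ((ψ₁ c)⁻¹ * ψ₂ c)⁻¹
          = (ψ₁ c)⁻¹ * (ψ₂ c * φ x * (ψ₂ c)⁻¹) * ψ₁ c := by group
        _ = (ψ₁ c)⁻¹ * (ψ₁ c * φ x * (ψ₁ c)⁻¹) * ψ₁ c := by rw [← E]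
        _ = φ x := by group
    have ha2 : ψ₁ c * ψ₁ c = φ C2 := by rw [← map_mul]; exact e₁ (c * c) hcc
    have hb2 : ψ₂ c * ψ₂ c = φ C2 := by rw [← map_mul]; exact e₂ (c * c) hcc
    set z0 : G := (ψ₁ c)⁻¹ * ψ₂ c with hz0def
    have z0comm : ∀ a : G, a * z0 = z0 * a := Subgroup.mem_center_iff.mp hz0
    have hb : ψ₂ c = ψ₁ c * z0 := by rw [hz0def]; group
    have hzz : z0 * z0 = 1 := by
      have key : φ C2 = φ C2 * (z0 * z0) := by
        calc φ C2 = ψ₂ c * ψ₂ c := hb2.symm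
          _ = ψ₁ c * (z0 * ψ₁ c) * z0 := by rw [hb]; group
          _ = ψ₁ c * (ψ₁ c * z0) * z0 := by rw [z0comm (ψ₁ c)]
          _ = (ψ₁ c * ψ₁ c) * (z0 * z0) := by group
          _ = φ C2 * (z0 * z0) := by rw [ha2]
      exact (left_eq_mul.mp key)
    have hz01 : z0 = 1 := P2 z0 hz0 (by rw [sq]; exact hzz)
    have hcEq : ψ₂ c = ψ₁ c := by rw [hb, hz01, mul_one]
    refine ⟨1, fun y => ?_⟩
    rw [one_mul, inv_one, mul_one]
    by_cases hy : y ∈ H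
    · rw [e₁ y hy, e₂ y hy]
    · have hdec : y = c * (c⁻¹ * y) := by group
      have m : c⁻¹ * y ∈ H := hmemA hy
      calc ψ₂ y = ψ₂ (c * (c⁻¹ * y)) := by rw [← hdec]
        _ = ψ₂ c * ψ₂ (c⁻¹ * y) := by rw [map_mul]
        _ = ψ₁ c * φ ⟨c⁻¹ * y, m⟩ := by rw [hcEq, e₂ _ m]
        _ = ψ₁ c * ψ₁ (c⁻¹ * y) := by rw [e₁ _ m]
        _ = ψ₁ (c * (c⁻¹ * y)) := (map_mul ψ₁ c (c⁻¹ * y)).symm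
        _ = ψ₁ y := by rw [← hdec]
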